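/- If (A,B,C,P,Q,R) makes a Menelaus configuration in ℝ², then P, Q, and R are collinear. -/

import Mathlib

open scoped Classical

/-- The signed ratio `(X,Y;Z)`: equal to `XZ/YZ` if `Z` is (strictly) between `X` and `Y`,
and `-(XZ/YZ)` otherwise. -/
noncomputable def sratio {V : Type*} [NormedAddCommGroup V] [NormedSpace ℝ V]
    (X Y Z : V) : ℝ :=
  if Sbtw ℝ X Z Y then dist X Z / dist Y Z else -(dist X Z / dist Y Z)

/-- The signed ratio `(X,Y;Z)` is defined: the three points are mutually distinct
and collinear. -/
def RatioDefined {V : Type*} [NormedAddCommGroup V] [NormedSpace ℝ V] (X Y Z : V) : Prop :=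
  Collinear ℝ ({X, Y, Z} : Set V) ∧ X ≠ Y ∧ X ≠ Z ∧ Y ≠ Z

/-- A sextuple `(A,B,C,P,Q,R)` makes a Menelaus configuration when `(B,C;P)`, `(C,A;Q)`
and `(A,B;R)` are all defined and their product is `-1`. -/
def MenelausConfig {V : Type*} [NormedAddCommGroup V] [NormedSpace ℝ V]
    (A B C P Q R : V) : Prop :=
  RatioDefined B C P ∧ RatioDefined C A Q ∧ RatioDefined A B R ∧
    sratio B C P * sratio C A Q * sratio A B R = -1

lemma sratio_lineMap {V : Type*} [NormedAddCommGroup V] [NormedSpace ℝ V]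
    {X Y : V} (hXY : X ≠ Y) {t : ℝ} (ht0 : t ≠ 0) (ht1 : t ≠ 1) :
    sratio X Y (AffineMap.lineMap X Y t) = t / (1 - t) := by
  have hd : dist X Y ≠ 0 := dist_ne_zero.2 hXY
  have h1 : dist X (AffineMap.lineMap X Y t) = |t| * dist X Y := by
    rw [dist_comm, dist_lineMap_left, Real.norm_eq_abs]
  have h2 : dist Y (AffineMap.lineMap X Y t) = |1 - t| * dist X Y := by
    rw [dist_comm, dist_lineMap_right, Real.norm_eq_abs]
  have hq : dist X (AffineMap.lineMap X Y t) / dist Y (AffineMap.lineMap X Y t)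
      = |t| / |1 - t| := by
    rw [h1, h2, mul_div_mul_right _ _ hd]
  rw [sratio, sbtw_lineMap_iff, hq]
  rcases lt_trichotomy t 0 with h | h | h
  · rw [if_neg (by rintro ⟨-, h0, -⟩; linarith)]
    rw [abs_of_neg h, abs_of_pos (by linarith : (0:ℝ) < 1 - t)]
    field_simp
  · exact absurd h ht0
  · rcases lt_trichotomy t 1 with h' | h' | h'
    · rw [if_pos ⟨hXY, h, h'⟩, abs_of_pos h, abs_of_pos (by linarith : (0:ℝ) < 1 - t)]
    · exact absurd h' ht1
    · rw [if_neg (by rintro ⟨-, -, h1'⟩; linarith)]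
      rw [abs_of_pos h, abs_of_neg (by linarith : (1:ℝ) - t < 0)]
      have h1t : (1:ℝ) - t ≠ 0 := by intro hh; linarith
      have ht1' : t - 1 ≠ 0 := by intro hh; linarith
      field_simp

lemma exists_param {V : Type*} [NormedAddCommGroup V] [NormedSpace ℝ V]
    {X Y Z : V} (hcol : Collinear ℝ ({X, Y, Z} : Set V)) (hXY : X ≠ Y)
    (hXZ : X ≠ Z) (hYZ : Y ≠ Z) :
    ∃ t : ℝ, t ≠ 0 ∧ t ≠ 1 ∧ Z = AffineMap.lineMap X Y t := by
  have hZ : Z ∈ line[ℝ, X, Y] :=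
    hcol.mem_affineSpan_of_mem_of_ne (Set.mem_insert _ _)
      (Set.mem_insert_of_mem _ (Set.mem_insert _ _))
      (Set.mem_insert_of_mem _ (Set.mem_insert_of_mem _ rfl)) hXY
  have hZ' : (Z -ᵥ X) +ᵥ X ∈ line[ℝ, X, Y] := by simpa using hZ
  obtain ⟨t, ht⟩ := vadd_left_mem_affineSpan_pair.1 hZ'
  refine ⟨t, ?_, ?_, ?_⟩
  · rintro rfl
    simp at ht
    rw [eq_comm, sub_eq_zero] at ht
    exact hXZ ht.symm
  · rintro rfl
    simp at ht
    exact hYZ ht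
  · rw [AffineMap.lineMap_apply, ht]
    simp

/-- If `(A,B,C,P,Q,R)` makes a Menelaus configuration in `ℝ²`, then `P`, `Q`, `R`
are collinear. -/
theorem menelausConfig_collinear (A B C P Q R : EuclideanSpace ℝ (Fin 2))
    (h : MenelausConfig A B C P Q R) :
    Collinear ℝ ({P, Q, R} : Set (EuclideanSpace ℝ (Fin 2))) := by
  obtain ⟨⟨hc1, hBC, hBP, hCP⟩, ⟨hc2, hCA, hCQ, hAQ⟩, ⟨hc3, hAB, hAR, hBR⟩, hprod⟩ := h
  obtain ⟨p, hp0, hp1, hP⟩ := exists_param hc1 hBC hBP hCP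
  obtain ⟨q, hq0, hq1, hQ⟩ := exists_param hc2 hCA hCQ hAQ
  obtain ⟨r, hr0, hr1, hR⟩ := exists_param hc3 hAB hAR hBR
  rw [hP, hQ, hR, sratio_lineMap hBC hp0 hp1, sratio_lineMap hCA hq0 hq1,
    sratio_lineMap hAB hr0 hr1] at hprod
  have hp1' : (1:ℝ) - p ≠ 0 := fun hh => hp1 (by linarith)
  have hq1' : (1:ℝ) - q ≠ 0 := fun hh => hq1 (by linarith)
  have hr1' : (1:ℝ) - r ≠ 0 := fun hh => hr1 (by linarith)
  field_simp at hprod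
  have key : 1 - p - q - r + (p*q + p*r + q*r) = 0 := by linear_combination hprod
  have hkey2 : p • (Q - P) + (1 - p - q) • (R - P) = (0 : EuclideanSpace ℝ (Fin 2)) := by
    rw [hP, hQ, hR, AffineMap.lineMap_apply_module, AffineMap.lineMap_apply_module,
      AffineMap.lineMap_apply_module]
    match_scalars <;> first | ring1 | linear_combination key | linear_combination -key
  have hQP : Q - P = (p⁻¹ * -(1 - p - q)) • (R - P) := by
    have h1 : p • (Q - P) = (-(1 - p - q)) • (R - P) := by
      rw [neg_smul]
      exact eq_neg_of_add_eq_zero_left hkey2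
    apply smul_right_injective (EuclideanSpace ℝ (Fin 2)) hp0
    show p • (Q - P) = p • ((p⁻¹ * -(1 - p - q)) • (R - P))
    rw [h1, smul_smul, ← mul_assoc, mul_inv_cancel₀ hp0, one_mul]
  rw [collinear_iff_exists_forall_eq_smul_vadd]
  refine ⟨P, R - P, ?_⟩
  rintro x hx
  simp only [Set.mem_insert_iff, Set.mem_singleton_iff] at hx
  rcases hx with rfl | rfl | rfl
  · exact ⟨0, by simp⟩
  · refine ⟨p⁻¹ * -(1 - p - q), ?_⟩
    rw [← hQP]
    simp [vadd_eq_add]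
  · exact ⟨1, by simp [vadd_eq_add]⟩
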